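/- Let C be a quadrilinear tensor on a 4-dimensional oriented Lorentzian (or inner product) vector space with the symmetries of the Weyl tensor, and T a symmetric bilinear form that is C-compatible: T(C(Y,Z)W,X) + T(C(Z,X)W,Y) + T(C(X,Y)W,Z) = 0. Then the 'magnetic part' of C with respect to T vanishes: Σ_{i,j,k} ε(e_i,e_j,e_k,P) T(e_i, e_m) C(e_j,e_k, ·, e_m) summed appropriately gives zero, i.e. ε^{ijk}{}_p T_i{}^m C_{jk l m} = 0 for all l, p. -/
import Mathlib


open RealInnerProductSpace

lemma eps_cycle {V : Type*} [AddCommGroup V] [Module ℝ V]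
    (eps : V [⋀^Fin 4]→ₗ[ℝ] ℝ) (a b c d : V) :
    eps ![b, c, a, d] = eps ![a, b, c, d] := by
  have h1 : ![c, b, a, d] = ![b, c, a, d] ∘ Equiv.swap (0 : Fin 4) 1 := by
    funext i; fin_cases i <;> simp [Equiv.swap_apply_def]
  have h2 : ![a, b, c, d] = ![c, b, a, d] ∘ Equiv.swap (0 : Fin 4) 2 := by
    funext i; fin_cases i <;> simp [Equiv.swap_apply_def]
  rw [h2, AlternatingMap.map_swap _ _ (by decide), h1,
    AlternatingMap.map_swap _ _ (by decide), neg_neg]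

lemma sum3_rot (f : Fin 4 → Fin 4 → Fin 4 → ℝ) :
    (∑ i, ∑ j, ∑ k, f j k i) = ∑ i, ∑ j, ∑ k, f i j k := by
  rw [Finset.sum_comm]
  congr 1; ext j
  rw [Finset.sum_comm]

/-!
`V` is a 4-dimensional real inner product space with volume form `ε` (a nonzero
alternating 4-form) and orthonormal basis `(eᵢ)`.  `C` is a quadrilinear tensor with
the symmetries of the Weyl tensor (i.e. of a generalized curvature tensor); the
symmetric bilinear form `T` (the energy-momentum tensor) is represented by the
self-adjoint operator `Top` via `T(X,Y) = ⟪Top X, Y⟫`, so that `C`-compatibility of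
`T`, namely `T(C(Y,Z)W, X) + T(C(Z,X)W, Y) + T(C(X,Y)W, Z) = 0`, reads
`C(Y,Z,W, Top X) + C(Z,X,W, Top Y) + C(X,Y,W, Top Z) = 0`.  The conclusion is the
vanishing of the magnetic part: `ε_{ijkp} T^{im} C^{jk}{}_{lm} = 0` for all `l, p`. -/
theorem magnetic_part_vanishes_of_weyl_compatible
    {V : Type*} [NormedAddCommGroup V] [InnerProductSpace ℝ V] [FiniteDimensional ℝ V]
    (hdim : Module.finrank ℝ V = 4)
    (eps : V [⋀^Fin 4]→ₗ[ℝ] ℝ) (hvol : eps ≠ 0)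
    (e : OrthonormalBasis (Fin 4) ℝ V)
    (C : V →ₗ[ℝ] V →ₗ[ℝ] V →ₗ[ℝ] V →ₗ[ℝ] ℝ)
    (hanti1 : ∀ X Y Z W : V, C X Y Z W = - C Y X Z W)
    (hanti2 : ∀ X Y Z W : V, C X Y Z W = - C X Y W Z)
    (hpair : ∀ X Y Z W : V, C X Y Z W = C Z W X Y)
    (hbianchi : ∀ X Y Z W : V, C X Y Z W + C Y Z X W + C Z X Y W = 0)
    (T : V →ₗ[ℝ] V →ₗ[ℝ] ℝ)
    (hTsymm : ∀ X Y : V, T X Y = T Y X)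
    (Top : V →ₗ[ℝ] V)
    (hTop : ∀ X Y : V, T X Y = ⟪Top X, Y⟫)
    -- `T` is `C`-compatible:
    (hcompat : ∀ X Y Z W : V,
      C Y Z W (Top X) + C Z X W (Top Y) + C X Y W (Top Z) = 0) :
    -- the magnetic part of `C` with respect to `T` vanishes:
    ∀ L P : V,
      (∑ i, ∑ j, ∑ k, ∑ m,
        eps ![e i, e j, e k, P] * T (e i) (e m) * C (e j) (e k) L (e m)) = 0 := by
  intro L P
  -- collapse the `m`-sum using the orthonormal expansion of `Top (e i)`
  have hm : ∀ i j k : Fin 4,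
      (∑ m, eps ![e i, e j, e k, P] * T (e i) (e m) * C (e j) (e k) L (e m))
        = eps ![e i, e j, e k, P] * C (e j) (e k) L (Top (e i)) := by
    intro i j k
    have hrepr : (∑ m, ⟪e m, Top (e i)⟫ • e m) = Top (e i) := e.sum_repr' (Top (e i))
    calc (∑ m, eps ![e i, e j, e k, P] * T (e i) (e m) * C (e j) (e k) L (e m))
        = eps ![e i, e j, e k, P] *
            ∑ m, C (e j) (e k) L (⟪e m, Top (e i)⟫ • e m) := by
          rw [Finset.mul_sum]
          refine Finset.sum_congr rfl fun m _ => ?_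
          rw [map_smul, hTop, real_inner_comm]
          simp [mul_assoc]
      _ = eps ![e i, e j, e k, P] * C (e j) (e k) L (Top (e i)) := by
          rw [← map_sum, hrepr]
  simp_rw [hm]
  -- now the cyclic argument
  set f : Fin 4 → Fin 4 → Fin 4 → ℝ :=
    fun i j k => eps ![e i, e j, e k, P] * C (e j) (e k) L (Top (e i)) with hf
  show (∑ i, ∑ j, ∑ k, f i j k) = 0
  have h1 : (∑ i, ∑ j, ∑ k, f j k i) = ∑ i, ∑ j, ∑ k, f i j k := sum3_rot f
  have h2 : (∑ i, ∑ j, ∑ k, f k i j) = ∑ i, ∑ j, ∑ k, f i j k :=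
    (sum3_rot (fun i j k => f k i j)).symm
  have h3 : (∑ i, ∑ j, ∑ k, (f i j k + f j k i + f k i j)) = 0 := by
    refine Finset.sum_eq_zero fun i _ => Finset.sum_eq_zero fun j _ =>
      Finset.sum_eq_zero fun k _ => ?_
    have hc1 : eps ![e j, e k, e i, P] = eps ![e i, e j, e k, P] :=
      eps_cycle eps (e i) (e j) (e k) P
    have hc2 : eps ![e k, e i, e j, P] = eps ![e i, e j, e k, P] :=
      (eps_cycle eps (e j) (e k) (e i) P).trans hc1
    have := hcompat (e i) (e j) (e k) L
    simp only [hf, hc1, hc2]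
    rw [← mul_add, ← mul_add, this, mul_zero]
  simp only [Finset.sum_add_distrib] at h3
  rw [h1, h2] at h3
  linarith
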